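/- Define the Narumi numbers of order a by (log(1+t)/t)^a = ∑_{l≥0} N_l^{(a)} t^l/l! (for a a positive integer). Then for every n ≥ 1 and every l ≥ 0, N_l^{(n)}/n = B_l^{(n+l)}/(n+l), where B_l^{(m)} is the l-th Bernoulli number of order m. -/

import Mathlib

open PowerSeries Nat

noncomputable section

/-- The exponential series `e^t ∈ ℚ[[t]]`. -/
def expS : PowerSeries ℚ := PowerSeries.exp ℚ

/-- `log(1+t) = ∑_{k≥1} (-1)^{k+1} t^k / k`. -/
def logS : PowerSeries ℚ := PowerSeries.mk fun k => if k = 0 then 0 else (-1 : ℚ)^(k+1) / k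

/-- `log(1+t)/t = ∑_{k≥0} (-1)^k t^k/(k+1)`. -/
def LtS : PowerSeries ℚ := PowerSeries.mk fun k => (-1 : ℚ)^k / (k+1)

/-- `(e^{bt} - 1)/t`. -/
def ebt (b : ℚ) : PowerSeries ℚ := PowerSeries.mk fun m => b^(m+1) / (m+1)!

/-- Falling factorial `(x)_m = x(x-1)⋯(x-m+1)`. -/
def ff (x : ℚ) (m : ℕ) : ℚ := ∏ i ∈ Finset.range m, (x - i)

/-- `(1+t)^x = ∑_m (x)_m t^m/m!`. -/
def onePlusPow (x : ℚ) : PowerSeries ℚ := PowerSeries.mk fun m => ff x m / m !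

/-- Integer powers of a power series (negative powers via `PowerSeries.inv`). -/
def zp (f : PowerSeries ℚ) : ℤ → PowerSeries ℚ
  | Int.ofNat n => f ^ n
  | Int.negSucc n => f⁻¹ ^ (n + 1)

/-- Stirling numbers of the second kind. -/
def S2 : ℕ → ℕ → ℕ
  | 0, 0 => 1
  | 0, _ + 1 => 0
  | _ + 1, 0 => 0
  | n + 1, k + 1 => (k + 1) * S2 n (k + 1) + S2 n k

/-- Signed Stirling numbers of the first kind: `(x)_n = ∑_l S1 n l • x^l`. -/
def S1 : ℕ → ℕ → ℤ
  | 0, 0 => 1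
  | 0, _ + 1 => 0
  | _ + 1, 0 => 0
  | n + 1, k + 1 => S1 n k - n * S1 n (k + 1)

/-- Bernoulli polynomial of (integer) order `a` evaluated at `x`:
`(t/(e^t-1))^a e^{xt} = ∑_m Bpol a x m • t^m/m!`. -/
def Bpol (a : ℤ) (x : ℚ) (m : ℕ) : ℚ :=
  m ! * PowerSeries.coeff m (zp (ebt 1)⁻¹ a * PowerSeries.rescale x expS)

/-- Bernoulli numbers of order `a`. -/
def Bnum (a : ℤ) (m : ℕ) : ℚ := Bpol a 0 m

/-- Narumi numbers: `(log(1+t)/t)^n = ∑_l Nnum n l • t^l/l!`. -/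
def Nnum (n l : ℕ) : ℚ := l ! * PowerSeries.coeff l (LtS ^ n)

/-- Narumi polynomials of (integer) order `a`:
`(log(1+t)/t)^a (1+t)^x = ∑_l Npol a x l • t^l/l!`. -/
def Npol (a : ℤ) (x : ℚ) (l : ℕ) : ℚ :=
  l ! * PowerSeries.coeff l (zp LtS a * onePlusPow x)

/-- Bernoulli polynomials of the second kind:
`t(1+t)^x/log(1+t) = ∑_m b2 x m • t^m/m!`. -/
def b2 (x : ℚ) (m : ℕ) : ℚ := m ! * PowerSeries.coeff m (onePlusPow x * LtS⁻¹)

/-- Poisson–Charlier polynomial `C_n(x;a)`. -/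
def PC (n : ℕ) (x a : ℚ) : ℚ :=
  ∑ k ∈ Finset.range (n + 1), (n.choose k : ℚ) * (-1)^(n - k) * (a⁻¹)^k * ff x k

/-- Generalized binomial coefficient `C(x, m) = (x)_m/m!`. -/
def gchoose (x : ℚ) (m : ℕ) : ℚ := ff x m / m !

/-- Action of a power series `f(t) = ∑ a_k t^k/k!` on a polynomial:
`f(t) p(x) = ∑_k a_k p^{(k)}(x)/k!` (a finite sum). -/
def act (f : PowerSeries ℚ) (p : Polynomial ℚ) : Polynomial ℚ :=
  ∑ k ∈ Finset.range (p.natDegree + 1),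
    PowerSeries.coeff k f • (⇑Polynomial.derivative)^[k] p

/-- `e^{xt} ∈ (ℚ[x])[[t]]`. -/
def expPoly : PowerSeries (Polynomial ℚ) :=
  PowerSeries.mk fun k => ((k ! : ℚ)⁻¹) • Polynomial.X ^ k

/-- The Sheffer polynomial sequence attached to an invertible series `f`:
`f(t) e^{xt} = ∑_n (polyOf f n) t^n/n!`. -/
def polyOf (f : PowerSeries ℚ) (n : ℕ) : Polynomial ℚ :=
  (n ! : ℚ) • PowerSeries.coeff n (PowerSeries.map Polynomial.C f * expPoly)

/-- `((1-λ)/(e^t-λ))^α`. -/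
def FEser (lam : ℚ) (α : ℕ) : PowerSeries ℚ :=
  (PowerSeries.C (R := ℚ) (1 - lam) * (expS - PowerSeries.C (R := ℚ) lam)⁻¹) ^ α

/-- Frobenius–Euler polynomials of order `α`. -/
def FE (lam : ℚ) (α n : ℕ) : Polynomial ℚ := polyOf (FEser lam α) n

/-- `(2/(e^t+1))^α`. -/
def Eser (α : ℕ) : PowerSeries ℚ := (PowerSeries.C (R := ℚ) 2 * (expS + 1)⁻¹) ^ α

/-- Euler polynomials of order `α`. -/
def Epol (α n : ℕ) : Polynomial ℚ := polyOf (Eser α) n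

/-- `((1-λ)/(e^{(λ-1)t}-λ))^α`. -/
def Aser (lam : ℚ) (α : ℕ) : PowerSeries ℚ :=
  (PowerSeries.C (R := ℚ) (1 - lam) *
    (PowerSeries.rescale (lam - 1) expS - PowerSeries.C (R := ℚ) lam)⁻¹) ^ α

/-- Frobenius-type Eulerian polynomials of order `α`. -/
def Apol (lam : ℚ) (α n : ℕ) : Polynomial ℚ := polyOf (Aser lam α) n

end

noncomputable section AuxProof

lemma logS_eq : logS = X * LtS := by
  ext k
  cases k with
  | zero => simp [logS, LtS, coeff_mk]
  | succ k =>
      rw [coeff_succ_X_mul]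
      simp [logS, LtS, coeff_mk, pow_succ]

lemma one_add_X_mul_deriv_logS : (1 + X) * d⁄dX ℚ logS = 1 := by
  have hD : d⁄dX ℚ logS = PowerSeries.mk fun k => (-1 : ℚ)^k := by
    ext k
    rw [coeff_derivative]
    simp only [logS, coeff_mk, Nat.succ_ne_zero, if_false]
    have : ((k:ℚ)+1) ≠ 0 := by positivity
    field_simp
    push_cast
    ring
  rw [hD]
  ext k
  cases k with
  | zero => simp [coeff_mk]
  | succ k =>
      rw [add_mul, one_mul, map_add, coeff_succ_X_mul]
      simp [coeff_mk, pow_succ]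

lemma constCoeff_ebt : constantCoeff (ebt 1) = 1 := by
  rw [← coeff_zero_eq_constantCoeff]
  simp [ebt, coeff_mk]

lemma X_mul_deriv_ebt : X * d⁄dX ℚ (ebt 1) = 1 + X * ebt 1 - ebt 1 := by
  ext k
  cases k with
  | zero =>
      simp [coeff_zero_eq_constantCoeff, constCoeff_ebt]
  | succ k =>
      rw [coeff_succ_X_mul, coeff_derivative, map_sub, map_add, coeff_succ_X_mul]
      simp only [ebt, coeff_mk, one_pow, coeff_one, Nat.succ_ne_zero, if_false]
      have h1 : ((k+1)! : ℚ) ≠ 0 := by positivity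
      have h2 : ((k+2)! : ℚ) ≠ 0 := by positivity
      have h3 : ((k+2)! : ℚ) = (k+2) * (k+1)! := by
        rw [show k+2 = (k+1)+1 from rfl, Nat.factorial_succ]; push_cast; ring
      field_simp
      rw [show k+1+1 = k+2 from rfl, h3]
      ring

lemma ebt_mul_inv : ebt 1 * (ebt 1)⁻¹ = 1 :=
  PowerSeries.mul_inv_cancel _ (by rw [constCoeff_ebt]; exact one_ne_zero)

lemma X_mul_deriv_inv :
    X * d⁄dX ℚ (ebt 1)⁻¹ = (ebt 1)⁻¹ - (ebt 1)⁻¹^2 - X * (ebt 1)⁻¹ := by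
  rw [PowerSeries.derivative_inv']
  have E1 := X_mul_deriv_ebt
  have E2 := ebt_mul_inv
  linear_combination (-((ebt 1)⁻¹^2)) * E1 + ((ebt 1)⁻¹ - X * (ebt 1)⁻¹) * E2

lemma X_mul_deriv_inv_pow (m : ℕ) :
    X * d⁄dX ℚ ((ebt 1)⁻¹ ^ (m+1)) =
      ((m+1 : ℕ) : PowerSeries ℚ) *
        ((ebt 1)⁻¹^(m+1) - (ebt 1)⁻¹^(m+2) - X * (ebt 1)⁻¹^(m+1)) := by
  rw [Derivation.leibniz_pow]
  simp only [Nat.add_sub_cancel, nsmul_eq_mul, smul_eq_mul]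
  linear_combination (((m+1:ℕ) : PowerSeries ℚ) * (ebt 1)⁻¹^m) * X_mul_deriv_inv

lemma coeff_X_mul_deriv (f : PowerSeries ℚ) (k : ℕ) :
    PowerSeries.coeff k (X * d⁄dX ℚ f) = k * PowerSeries.coeff k f := by
  cases k with
  | zero => simp [coeff_zero_eq_constantCoeff]
  | succ k => rw [coeff_succ_X_mul, coeff_derivative]; push_cast; ring

lemma S1_eq_zero_of_lt : ∀ n k : ℕ, n < k → S1 n k = 0 := by
  intro n
  induction n with
  | zero => intro k hk; match k, hk with | k+1, _ => rfl
  | succ n ih =>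
      intro k hk
      match k, hk with
      | k+1, hk =>
          show S1 n k - n * S1 n (k+1) = 0
          rw [ih k (by omega), ih (k+1) (by omega)]
          ring

lemma S1_diag : ∀ n : ℕ, S1 n n = 1 := by
  intro n
  induction n with
  | zero => rfl
  | succ n ih =>
      show S1 n n - n * S1 n (n+1) = 1
      rw [ih, S1_eq_zero_of_lt n (n+1) (by omega)]
      ring

def Ac (m l : ℕ) : ℚ := PowerSeries.coeff l ((ebt 1)⁻¹ ^ m)

lemma Ac_zero (m : ℕ) : Ac m 0 = 1 := by
  simp [Ac, coeff_zero_eq_constantCoeff, map_pow, PowerSeries.constantCoeff_inv, constCoeff_ebt]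

lemma Ac_rec (m l : ℕ) :
    ((m:ℚ)+1) * Ac (m+2) (l+1) = ((m:ℚ) - l) * Ac (m+1) (l+1) - ((m:ℚ)+1) * Ac (m+1) l := by
  have h := congrArg (PowerSeries.coeff (l+1)) (X_mul_deriv_inv_pow m)
  have hc : ((m+1:ℕ) : PowerSeries ℚ) = PowerSeries.C ((m:ℚ)+1) := by
    rw [← map_natCast (PowerSeries.C (R := ℚ)) (m+1)]
    push_cast
    ring_nf
  rw [coeff_X_mul_deriv, hc, PowerSeries.coeff_C_mul, map_sub, map_sub,
    coeff_succ_X_mul] at h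
  push_cast at h
  simp only [Ac]
  linear_combination h

lemma keyB : ∀ l n' : ℕ, (((n'+l)! : ℚ)) * Ac (n'+l+1) l = S1 (n'+l+1) (n'+1) * (n' ! : ℚ) := by
  intro l
  induction l with
  | zero =>
      intro n'
      simp [Ac_zero, S1_diag]
  | succ l ihl =>
      intro n'
      induction n' with
      | zero =>
          have h1 := Ac_rec l l
          have h2 := ihl 0
          simp only [Nat.zero_add, Nat.factorial_zero, Nat.cast_one, mul_one] at h2 ⊢
          have hf : ((l+1)! : ℚ) = ((l:ℚ)+1) * (l ! : ℚ) := by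
            rw [Nat.factorial_succ]; push_cast; ring
          have hS : (S1 (l+2) 1 : ℚ) = -((l:ℚ)+1) * (S1 (l+1) 1 : ℚ) := by
            have e : S1 (l+2) 1 = S1 (l+1) 0 - (l+1) * S1 (l+1) 1 := rfl
            have e0 : S1 (l+1) 0 = 0 := rfl
            rw [e, e0]
            push_cast
            ring
          linear_combination (l ! : ℚ) * h1 - ((l:ℚ)+1) * h2 + Ac (l+2) (l+1) * hf - hS
      | succ n'' ihn =>
          have h1 := Ac_rec (n''+l+1) l
          have h2 := ihn
          have h3 := ihl (n''+1)
          simp only [show n''+1+(l+1) = n''+l+2 from by omega,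
            show n''+1+(l+1)+1 = n''+l+3 from by omega,
            show n''+(l+1) = n''+l+1 from by omega,
            show n''+(l+1)+1 = n''+l+2 from by omega,
            show n''+1+l = n''+l+1 from by omega,
            show n''+1+l+1 = n''+l+2 from by omega,
            show n''+1+1 = n''+2 from by omega,
            show n''+l+1+1 = n''+l+2 from by omega,
            show n''+l+1+2 = n''+l+3 from by omega] at h1 h2 h3 ⊢
          have hS : (S1 (n''+l+3) (n''+2) : ℚ)
              = (S1 (n''+l+2) (n''+1) : ℚ) - ((n'':ℚ)+(l:ℚ)+2) * (S1 (n''+l+2) (n''+2) : ℚ) := by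
            have e : S1 (n''+l+3) (n''+2) = S1 (n''+l+2) (n''+1) - (n''+l+2) * S1 (n''+l+2) (n''+2) := rfl
            rw [e]
            push_cast
            ring
          have hf1 : ((n''+l+2)! : ℚ) = ((n'':ℚ)+(l:ℚ)+2) * ((n''+l+1)! : ℚ) := by
            rw [show n''+l+2 = (n''+l+1)+1 from rfl, Nat.factorial_succ]
            push_cast
            ring
          have hf2 : ((n''+1)! : ℚ) = ((n'':ℚ)+1) * (n'' ! : ℚ) := by
            rw [Nat.factorial_succ]; push_cast; ring
          push_cast at h1
          linear_combination ((n''+l+1)! : ℚ) * h1 + ((n'':ℚ)+1) * h2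
            - ((n'':ℚ)+(l:ℚ)+2) * h3 + Ac (n''+l+3) (l+1) * hf1
            - (S1 (n''+l+2) (n''+1) : ℚ) * hf2 - ((n''+1)! : ℚ) * hS

def Lc (n k : ℕ) : ℚ := PowerSeries.coeff k (logS ^ n)

lemma L_series (n : ℕ) :
    (1 + X) * d⁄dX ℚ (logS^(n+1)) = PowerSeries.C ((n:ℚ)+1) * logS^n := by
  rw [Derivation.leibniz_pow]
  simp only [Nat.add_sub_cancel, nsmul_eq_mul, smul_eq_mul]
  have hc : ((n+1:ℕ) : PowerSeries ℚ) = PowerSeries.C ((n:ℚ)+1) := by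
    rw [← map_natCast (PowerSeries.C (R := ℚ)) (n+1)]
    push_cast
    ring_nf
  rw [hc]
  linear_combination (PowerSeries.C ((n:ℚ)+1) * logS^n) * one_add_X_mul_deriv_logS

lemma Lc_rec (n k : ℕ) :
    ((k:ℚ)+1) * Lc (n+1) (k+1) + k * Lc (n+1) k = ((n:ℚ)+1) * Lc n k := by
  have h := congrArg (PowerSeries.coeff k) (L_series n)
  rw [add_mul, one_mul, map_add, PowerSeries.coeff_C_mul, coeff_derivative] at h
  cases k with
  | zero =>
      rw [show ((0:ℕ):ℚ) = 0 from rfl]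
      have h0 : PowerSeries.coeff 0 (X * d⁄dX ℚ (logS^(n+1))) = 0 := by
        rw [coeff_zero_eq_constantCoeff]
        simp
      rw [h0] at h
      simp only [Lc]
      push_cast at h ⊢
      linear_combination h
  | succ k =>
      rw [coeff_succ_X_mul, coeff_derivative] at h
      simp only [Lc]
      push_cast at h ⊢
      linear_combination h

lemma keyN : ∀ n k : ℕ, (k ! : ℚ) * Lc n k = (n ! : ℚ) * (S1 k n : ℚ) := by
  intro n
  induction n with
  | zero =>
      intro k
      cases k with
      | zero => simp [Lc, S1]
      | succ k =>
          simp only [Lc, pow_zero, PowerSeries.coeff_one, Nat.succ_ne_zero, if_false,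
            show S1 (k+1) 0 = 0 from rfl]
          push_cast
          ring
  | succ n ihn =>
      intro k
      induction k with
      | zero =>
          have : Lc (n+1) 0 = 0 := by
            simp only [Lc, coeff_zero_eq_constantCoeff, map_pow]
            have : constantCoeff logS = 0 := by
              rw [← coeff_zero_eq_constantCoeff]; simp [logS]
            rw [this, zero_pow (Nat.succ_ne_zero n)]
          rw [this, show S1 0 (n+1) = 0 from rfl]
          push_cast
          ring
      | succ k ihk =>
          have h1 := Lc_rec n k
          have h2 := ihn k
          have hS : (S1 (k+1) (n+1) : ℚ) = (S1 k n : ℚ) - (k:ℚ) * (S1 k (n+1) : ℚ) := by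
            have e : S1 (k+1) (n+1) = S1 k n - k * S1 k (n+1) := rfl
            rw [e]; push_cast; ring
          have hf1 : ((k+1)! : ℚ) = ((k:ℚ)+1) * (k ! : ℚ) := by
            rw [Nat.factorial_succ]; push_cast; ring
          have hf2 : ((n+1)! : ℚ) = ((n:ℚ)+1) * (n ! : ℚ) := by
            rw [Nat.factorial_succ]; push_cast; ring
          linear_combination Lc (n+1) (k+1) * hf1 + (k ! : ℚ) * h1 + ((n:ℚ)+1) * h2
            - (k:ℚ) * ihk - ((n+1)! : ℚ) * hS - (S1 k n : ℚ) * hf2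

end AuxProof

theorem stmt4 (n : ℕ) (hn : 1 ≤ n) (l : ℕ) :
    Nnum n l / n = Bnum ((n : ℤ) + l) l / ((n : ℚ) + l) := by
  obtain ⟨n', rfl⟩ : ∃ n', n = n'+1 := ⟨n-1, by omega⟩
  have hN : Nnum (n'+1) l = (l ! : ℚ) * Lc (n'+1) (n'+l+1) := by
    unfold Nnum Lc
    congr 1
    rw [logS_eq, mul_pow, show n'+l+1 = l+(n'+1) from by omega,
      PowerSeries.coeff_X_pow_mul]
  have hzp : zp (ebt 1)⁻¹ (((n'+1:ℕ):ℤ) + (l:ℤ)) = (ebt 1)⁻¹ ^ (n'+l+1) := by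
    have e : (((n'+1:ℕ):ℤ) + (l:ℤ)) = ((n'+l+1 : ℕ) : ℤ) := by push_cast; ring
    rw [e]
    rfl
  have hB : Bnum (((n'+1:ℕ):ℤ) + l) l = (l ! : ℚ) * Ac (n'+l+1) l := by
    unfold Bnum Bpol Ac
    rw [hzp, rescale_zero]
    simp [expS, constantCoeff_exp]
  rw [hN, hB]
  have h1 := keyN (n'+1) (n'+l+1)
  have h2 := keyB l n'
  have hfA : ((n'+l+1)! : ℚ) = ((n':ℚ)+(l:ℚ)+1) * ((n'+l)! : ℚ) := by
    rw [show n'+l+1 = (n'+l)+1 from rfl, Nat.factorial_succ]; push_cast; ring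
  have hfB : ((n'+1)! : ℚ) = ((n':ℚ)+1) * (n' ! : ℚ) := by
    rw [Nat.factorial_succ]; push_cast; ring
  rw [hfA, hfB] at h1
  have hne1 : ((n'+1 : ℕ) : ℚ) ≠ 0 := by positivity
  have hne2 : (((n'+1:ℕ)):ℚ) + (l:ℚ) ≠ 0 := by positivity
  rw [div_eq_div_iff hne1 hne2]
  have hF0 : ((n'+l)! : ℚ) ≠ 0 := by positivity
  apply mul_left_cancel₀ hF0
  push_cast
  linear_combination (l ! : ℚ) * h1 - (l ! : ℚ) * ((n':ℚ)+1) * h2
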